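/- The poset P̂_ℬ associated with a chordal building set ℬ is a bounded graded poset: it contains the empty set as least element and S as greatest element (when ℬ is connected with |S| even and has no odd component), and every maximal chain from ∅ to S has length |S|/2. -/

import Mathlib

/-- The restriction of a collection of finsets to subsets of `I`. -/
def BS.restrict (B : Finset (Finset ℕ)) (I : Finset ℕ) : Finset (Finset ℕ) :=
  B.filter (· ⊆ I)

/-- `B` is a building set on `S`. -/
def BS.IsBuilding (S : Finset ℕ) (B : Finset (Finset ℕ)) : Prop :=
  (∀ J ∈ B, J ⊆ S ∧ J.Nonempty) ∧
  (∀ i ∈ S, ({i} : Finset ℕ) ∈ B) ∧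
  (∀ I ∈ B, ∀ J ∈ B, (I ∩ J).Nonempty → I ∪ J ∈ B)

/-- `B` is chordal: every "suffix" `{x ∈ I : a ≤ x}` of an element `I` is in `B`. -/
def BS.IsChordal (B : Finset (Finset ℕ)) : Prop :=
  ∀ I ∈ B, ∀ a ∈ I, I.filter (fun x => a ≤ x) ∈ B

/-- A connected component of `B`: an inclusion-maximal element. -/
def BS.IsComponent (B : Finset (Finset ℕ)) (C : Finset ℕ) : Prop :=
  C ∈ B ∧ ∀ J ∈ B, C ⊆ J → J = C

/-- The restriction of `B` to `I` has no connected component of odd cardinality. -/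
def BS.NoOddComp (B : Finset (Finset ℕ)) (I : Finset ℕ) : Prop :=
  ∀ C ∈ BS.restrict B I, BS.IsComponent (BS.restrict B I) C → Even C.card

/-- The poset `P̂_B` of subsets of `S` whose restriction has no odd component. -/
def BS.hatP (B : Finset (Finset ℕ)) (S : Finset ℕ) : Set (Finset ℕ) :=
  {I | I ⊆ S ∧ BS.NoOddComp B I}

/-- `L` is a (one-line notation) permutation of the finite set `S`. -/
def BS.IsPermOf (S : Finset ℕ) (L : List ℕ) : Prop :=
  L.Nodup ∧ L.toFinset = S

/-- `L` is a `B`-permutation: each entry lies in the same connected component of the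
restriction of `B` to the prefix as the maximum of the prefix. -/
def BS.IsBPerm (B : Finset (Finset ℕ)) (S : Finset ℕ) (L : List ℕ) : Prop :=
  BS.IsPermOf S L ∧
  ∀ i, i < L.length →
    ∃ C : Finset ℕ, BS.IsComponent (BS.restrict B (L.take (i + 1)).toFinset) C ∧
      L.getD i 0 ∈ C ∧ ∃ M ∈ C, ∀ y ∈ (L.take (i + 1)).toFinset, y ≤ M

/-- `L` is alternating: `x₁ > x₂ < x₃ > x₄ < ⋯`. -/
def BS.IsAlternating (L : List ℕ) : Prop :=
  ∀ i, i + 1 < L.length →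
    (i % 2 = 0 → L.getD (i + 1) 0 < L.getD i 0) ∧
    (i % 2 = 1 → L.getD i 0 < L.getD (i + 1) 0)

/-- `I₂` covers `I₁` in the poset `P̂_B` ordered by inclusion. -/
def BS.Covers (B : Finset (Finset ℕ)) (S : Finset ℕ) (I₁ I₂ : Finset ℕ) : Prop :=
  I₁ ∈ BS.hatP B S ∧ I₂ ∈ BS.hatP B S ∧ I₁ ⊂ I₂ ∧
    ∀ J ∈ BS.hatP B S, I₁ ⊂ J → ¬ J ⊂ I₂

namespace BSAux

lemma mem_restrict {B : Finset (Finset ℕ)} {I J : Finset ℕ} :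
    J ∈ BS.restrict B I ↔ J ∈ B ∧ J ⊆ I := by
  simp [BS.restrict]

/-- Every member of `restrict B X` is contained in a component. -/
lemma exists_comp {B : Finset (Finset ℕ)} {X P : Finset ℕ} (hP : P ∈ BS.restrict B X) :
    ∃ C, BS.IsComponent (BS.restrict B X) C ∧ P ⊆ C := by
  classical
  set T := (BS.restrict B X).filter (fun J => P ⊆ J) with hT
  have hTne : T.Nonempty := ⟨P, by simp [hT, hP]⟩
  obtain ⟨C, hCT, hmax⟩ := Finset.exists_max_image T Finset.card hTne
  simp only [hT, Finset.mem_filter] at hCT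
  refine ⟨C, ⟨hCT.1, ?_⟩, hCT.2⟩
  intro J hJ hCJ
  have hJT : J ∈ T := by simp [hT, hJ, hCT.2.trans hCJ]
  exact (Finset.eq_of_subset_of_card_le hCJ (hmax J hJT)).symm

/-- Two intersecting components coincide. -/
lemma comp_eq_of_inter' {S : Finset ℕ} {B : Finset (Finset ℕ)} (hB : BS.IsBuilding S B)
    {X C C' : Finset ℕ} (hC : BS.IsComponent (BS.restrict B X) C)
    (hC' : BS.IsComponent (BS.restrict B X) C') (h : (C ∩ C').Nonempty) : C = C' := by
  have h1 := mem_restrict.1 hC.1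
  have h2 := mem_restrict.1 hC'.1
  have hu : C ∪ C' ∈ BS.restrict B X :=
    mem_restrict.2 ⟨hB.2.2 C h1.1 C' h2.1 h, Finset.union_subset h1.2 h2.2⟩
  have e1 := hC.2 _ hu Finset.subset_union_left
  have e2 := hC'.2 _ hu Finset.subset_union_right
  exact e1.symm.trans e2

/-- If `K` entirely contains every component of `restrict B Y` it meets, then
`(Y ∩ K)` is a disjoint union of such components, hence has even cardinality. -/
lemma even_inter {S : Finset ℕ} {B : Finset (Finset ℕ)} (hB : BS.IsBuilding S B)
    {Y K : Finset ℕ} (hY : Y ⊆ S) (hno : BS.NoOddComp B Y)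
    (hK : ∀ P, BS.IsComponent (BS.restrict B Y) P → (P ∩ K).Nonempty → P ⊆ K) :
    Even ((Y ∩ K).card) := by
  classical
  set T := (BS.restrict B Y).filter
    (fun P => BS.IsComponent (BS.restrict B Y) P ∧ P ⊆ K) with hT
  have hcover : Y ∩ K = T.biUnion id := by
    apply Finset.Subset.antisymm
    · intro x hx
      have hxY : x ∈ Y := (Finset.mem_inter.1 hx).1
      have hxK : x ∈ K := (Finset.mem_inter.1 hx).2
      have hs : ({x} : Finset ℕ) ∈ BS.restrict B Y :=
        mem_restrict.2 ⟨hB.2.1 x (hY hxY), by simpa using hxY⟩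
      obtain ⟨P, hPc, hPs⟩ := exists_comp hs
      have hxP : x ∈ P := hPs (Finset.mem_singleton_self x)
      have hPK : P ⊆ K := hK P hPc ⟨x, Finset.mem_inter.2 ⟨hxP, hxK⟩⟩
      refine Finset.mem_biUnion.2 ⟨P, ?_, hxP⟩
      simp [hT, hPc.1, hPc, hPK]
    · intro x hx
      obtain ⟨P, hPT, hxP⟩ := Finset.mem_biUnion.1 hx
      simp only [hT, Finset.mem_filter] at hPT
      exact Finset.mem_inter.2 ⟨(mem_restrict.1 hPT.1).2 hxP, hPT.2.2 hxP⟩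
  rw [hcover, Finset.card_biUnion]
  · apply Finset.even_sum
    intro P hPT
    simp only [hT, Finset.mem_filter] at hPT
    exact hno P hPT.1 hPT.2.1
  · intro x hx y hy hxy
    rw [Finset.mem_coe, hT, Finset.mem_filter] at hx hy
    by_contra hdis
    obtain ⟨z, hz⟩ := Finset.not_disjoint_iff_nonempty_inter.1 (by simpa [id] using hdis)
    exact hxy (comp_eq_of_inter' hB hx.2.1 hy.2.1 ⟨z, hz⟩)

/-- Components of the restriction to a subset are swallowed by components of the
restriction to a superset. -/
lemma comp_cond {S : Finset ℕ} {B : Finset (Finset ℕ)} (hB : BS.IsBuilding S B)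
    {Y X K : Finset ℕ} (hYX : Y ⊆ X) (hKc : BS.IsComponent (BS.restrict B X) K) :
    ∀ P, BS.IsComponent (BS.restrict B Y) P → (P ∩ K).Nonempty → P ⊆ K := by
  intro P hP hPK
  have h1 := mem_restrict.1 hP.1
  have hPX : P ∈ BS.restrict B X := mem_restrict.2 ⟨h1.1, h1.2.trans hYX⟩
  obtain ⟨K', hK', hPK'⟩ := exists_comp hPX
  obtain ⟨z, hz⟩ := hPK
  have : K' = K := comp_eq_of_inter' hB hK' hKc
    ⟨z, Finset.mem_inter.2 ⟨hPK' (Finset.mem_inter.1 hz).1, (Finset.mem_inter.1 hz).2⟩⟩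
  exact this ▸ hPK'

/-- The interpolation lemma: between two comparable elements of `hatP` there is an
element two above the smaller one. -/
lemma interp {S : Finset ℕ} {B : Finset (Finset ℕ)} (hB : BS.IsBuilding S B)
    (hc : BS.IsChordal B) {I₁ I₂ : Finset ℕ}
    (h1 : I₁ ∈ BS.hatP B S) (h2 : I₂ ∈ BS.hatP B S) (hsub : I₁ ⊂ I₂) :
    ∃ J ∈ BS.hatP B S, I₁ ⊂ J ∧ J ⊆ I₂ ∧ J.card = I₁.card + 2 := by
  classical
  obtain ⟨h1S, h1no⟩ := h1
  obtain ⟨h2S, h2no⟩ := h2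
  obtain ⟨d, hd2, hd1⟩ := Finset.exists_of_ssubset hsub
  -- component of restrict B I₂ containing d
  have hs : ({d} : Finset ℕ) ∈ BS.restrict B I₂ :=
    mem_restrict.2 ⟨hB.2.1 d (h2S hd2), by simpa using hd2⟩
  obtain ⟨C, hCc, hdC⟩ := exists_comp hs
  have hdC' : d ∈ C := hdC (Finset.mem_singleton_self d)
  have hCsub : C ⊆ I₂ := (mem_restrict.1 hCc.1).2
  have hCeven : Even C.card := h2no C hCc.1 hCc
  -- C ∩ I₁ is even
  have hCI1even : Even ((I₁ ∩ C).card) :=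
    even_inter hB h1S h1no (comp_cond hB hsub.1 hCc)
  -- so C \ I₁ is even and nonempty, hence has ≥ 2 elements
  set D := C \ I₁ with hD
  have hDcard : D.card = C.card - (I₁ ∩ C).card := by
    have h' : (C \ I₁).card + (C ∩ I₁).card = C.card := Finset.card_sdiff_add_card_inter C I₁
    rw [hD, Finset.inter_comm I₁ C]
    omega
  have hDeven : Even D.card := by
    rw [hDcard, Nat.even_sub (Finset.card_le_card (Finset.inter_subset_right))]
    simp [hCeven, hCI1even]
  have hdD : d ∈ D := Finset.mem_sdiff.2 ⟨hdC', hd1⟩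
  have hDne : D.Nonempty := ⟨d, hdD⟩
  have hD2 : 2 ≤ D.card := by
    rcases hDeven with ⟨m, hm⟩
    have := Finset.card_pos.2 hDne
    omega
  -- a, b : two largest elements of D
  set a := D.max' hDne with ha
  have haD : a ∈ D := D.max'_mem hDne
  set D' := D.erase a with hD'
  have hD'ne : D'.Nonempty := by
    rw [← Finset.card_pos, hD', Finset.card_erase_of_mem haD]; omega
  set b := D'.max' hD'ne with hb
  have hbD' : b ∈ D' := D'.max'_mem hD'ne
  have hbD : b ∈ D := Finset.mem_of_mem_erase hbD'
  have hab : b ≠ a := Finset.ne_of_mem_erase hbD'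
  have hba : b ≤ a := D.le_max' b hbD
  have haC : a ∈ C := (Finset.mem_sdiff.1 haD).1
  have hbC : b ∈ C := (Finset.mem_sdiff.1 hbD).1
  have haI1 : a ∉ I₁ := (Finset.mem_sdiff.1 haD).2
  have hbI1 : b ∉ I₁ := (Finset.mem_sdiff.1 hbD).2
  have haI2 : a ∈ I₂ := hCsub haC
  have hbI2 : b ∈ I₂ := hCsub hbC
  -- the candidate
  set J := insert a (insert b I₁) with hJ
  have hJS : J ⊆ S := by
    intro x hx
    simp only [hJ, Finset.mem_insert] at hx
    rcases hx with rfl | rfl | hx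
    · exact h2S haI2
    · exact h2S hbI2
    · exact h1S hx
  have hI1J : I₁ ⊆ J := fun x hx => by simp [hJ, hx]
  -- the suffix of C above b lies in J and connects a with b
  have hCsuf : C.filter (fun x => b ≤ x) ∈ B := hc C (mem_restrict.1 hCc.1).1 b hbC
  have hsufJ : C.filter (fun x => b ≤ x) ⊆ J := by
    intro x hx
    obtain ⟨hxC, hbx⟩ := Finset.mem_filter.1 hx
    by_cases hxI1 : x ∈ I₁
    · exact hI1J hxI1
    · have hxD : x ∈ D := Finset.mem_sdiff.2 ⟨hxC, hxI1⟩
      by_cases hxa : x = a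
      · simp [hJ, hxa]
      · have hxD' : x ∈ D' := Finset.mem_erase.2 ⟨hxa, hxD⟩
        have : x ≤ b := D'.le_max' x hxD'
        have : x = b := le_antisymm this hbx
        simp [hJ, this]
  have hsufRJ : C.filter (fun x => b ≤ x) ∈ BS.restrict B J := mem_restrict.2 ⟨hCsuf, hsufJ⟩
  have hasuf : a ∈ C.filter (fun x => b ≤ x) := Finset.mem_filter.2 ⟨haC, hba⟩
  have hbsuf : b ∈ C.filter (fun x => b ≤ x) := Finset.mem_filter.2 ⟨hbC, le_refl b⟩
  -- J has no odd component
  have hJno : BS.NoOddComp B J := by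
    intro K hKR hKc
    have hKJ : K ⊆ J := (mem_restrict.1 hKR).2
    have hKI1even : Even ((I₁ ∩ K).card) :=
      even_inter hB h1S h1no (comp_cond hB hI1J hKc)
    by_cases hmeet : a ∈ K ∨ b ∈ K
    · -- both a and b are in K
      obtain ⟨K', hK'c, hsufK'⟩ := exists_comp hsufRJ
      have hKK' : K' = K := by
        apply comp_eq_of_inter' hB hK'c hKc
        rcases hmeet with h | h
        · exact ⟨a, Finset.mem_inter.2 ⟨hsufK' hasuf, h⟩⟩
        · exact ⟨b, Finset.mem_inter.2 ⟨hsufK' hbsuf, h⟩⟩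
      have haK : a ∈ K := hKK' ▸ hsufK' hasuf
      have hbK : b ∈ K := hKK' ▸ hsufK' hbsuf
      have hKeq : K = insert a (insert b (I₁ ∩ K)) := by
        apply Finset.Subset.antisymm
        · intro x hx
          have := hKJ hx
          simp only [hJ, Finset.mem_insert] at this
          rcases this with rfl | rfl | hxI1
          · simp
          · simp
          · simp [Finset.mem_inter.2 ⟨hxI1, hx⟩]
        · intro x hx
          simp only [Finset.mem_insert] at hx
          rcases hx with rfl | rfl | hx
          · exact haK
          · exact hbK
          · exact (Finset.mem_inter.1 hx).2
      rw [hKeq, Finset.card_insert_of_notMem, Finset.card_insert_of_notMem]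
      · rcases hKI1even with ⟨m, hm⟩; exact ⟨m + 1, by omega⟩
      · simp [hbI1]
      · simp only [Finset.mem_insert, Finset.mem_inter]
        push_neg
        exact ⟨hab.symm, fun h => absurd h haI1⟩
    · -- K avoids a and b, so K ⊆ I₁
      push_neg at hmeet
      have hKI1 : K ⊆ I₁ := by
        intro x hx
        have := hKJ hx
        simp only [hJ, Finset.mem_insert] at this
        rcases this with rfl | rfl | h
        · exact absurd hx hmeet.1
        · exact absurd hx hmeet.2
        · exact h
      have : I₁ ∩ K = K := Finset.inter_eq_right.2 hKI1
      rw [← this]; exact hKI1even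
  refine ⟨J, ⟨hJS, hJno⟩, ?_, ?_, ?_⟩
  · exact Finset.ssubset_iff_of_subset hI1J |>.2 ⟨a, by simp [hJ], haI1⟩
  · intro x hx
    simp only [hJ, Finset.mem_insert] at hx
    rcases hx with rfl | rfl | hx
    · exact haI2
    · exact hbI2
    · exact hsub.1 hx
  · rw [hJ, Finset.card_insert_of_notMem, Finset.card_insert_of_notMem hbI1]
    simp only [Finset.mem_insert]
    push_neg
    exact ⟨hab.symm, haI1⟩

/-- A cover step increases cardinality by exactly 2. -/
lemma covers_card {S : Finset ℕ} {B : Finset (Finset ℕ)} (hB : BS.IsBuilding S B)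
    (hc : BS.IsChordal B) {I₁ I₂ : Finset ℕ} (h : BS.Covers B S I₁ I₂) :
    I₂.card = I₁.card + 2 := by
  obtain ⟨h1, h2, hss, hcov⟩ := h
  obtain ⟨J, hJ, hIJ, hJI2, hJcard⟩ := interp hB hc h1 h2 hss
  by_cases hJe : J = I₂
  · rw [← hJe, hJcard]
  · exact absurd (Finset.ssubset_iff_subset_ne.2 ⟨hJI2, hJe⟩) (hcov J hJ hIJ)

lemma chain_card {S : Finset ℕ} {B : Finset (Finset ℕ)} (hB : BS.IsBuilding S B)
    (hc : BS.IsChordal B) :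
    ∀ c : List (Finset ℕ), c.Chain' (BS.Covers B S) → ∀ x l : Finset ℕ,
      c.head? = some x → c.getLast? = some l → l.card = x.card + 2 * (c.length - 1) := by
  intro c
  induction c with
  | nil => intro _ x l h; simp at h
  | cons y t ih =>
    intro hch x l hh hl
    simp only [List.head?_cons, Option.some.injEq] at hh
    subst hh
    cases t with
    | nil =>
      simp only [List.getLast?_singleton, Option.some.injEq] at hl
      subst hl; simp
    | cons z t' =>
      have hcov : BS.Covers B S y z := (List.isChain_cons_cons.1 hch).1
      have hch' : (z :: t').Chain' (BS.Covers B S) := (List.isChain_cons_cons.1 hch).2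
      have hl' : (z :: t').getLast? = some l := by
        rwa [List.getLast?_cons_cons] at hl
      have := ih hch' z l (by simp) hl'
      have hstep := covers_card hB hc hcov
      simp only [List.length_cons] at *
      omega

end BSAux

theorem hatP_bounded_graded (S : Finset ℕ) (B : Finset (Finset ℕ)) (k : ℕ)
    (hB : BS.IsBuilding S B) (hc : BS.IsChordal B) (hconn : S ∈ B)
    (hS : S.card = 2 * k) (hno : BS.NoOddComp B S) :
    (∅ : Finset ℕ) ∈ BS.hatP B S ∧ S ∈ BS.hatP B S ∧
    ∀ c : List (Finset ℕ), c.Chain' (BS.Covers B S) →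
      c.head? = some ∅ → c.getLast? = some S → c.length = k + 1 := by
  refine ⟨⟨Finset.empty_subset S, ?_⟩, ⟨Finset.Subset.refl S, hno⟩, ?_⟩
  · intro C hC _
    obtain ⟨hCB, hCe⟩ := BSAux.mem_restrict.1 hC
    have := (hB.1 C hCB).2
    rw [Finset.subset_empty] at hCe
    simp [hCe] at this
  · intro c hch hh hl
    have := BSAux.chain_card hB hc c hch ∅ S hh hl
    have hlen : c.length ≥ 1 := by
      cases c with
      | nil => simp at hh
      | cons _ _ => simp
    simp only [Finset.card_empty] at this
    omega
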